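/- Let A = W Λ Wᵀ be an eigendecomposition of an n×n real symmetric positive semidefinite matrix A, where W is orthogonal and Λ = diag(λ_1, …, λ_n) with λ_1 ≥ λ_2 ≥ … ≥ λ_n ≥ 0. Fix integers k ≥ 1 and j ≥ 1 with jk ≤ n, and for i = 1, …, j let W_i ∈ ℝ^{n×k} consist of columns (i−1)k+1 through ik of W. Let X ∈ ℝ^{n×k} be such that XᵀAX is invertible and Σ_{i=1}^{j} λ_{ik} σ_min(W_iᵀX)² > 0. Then ‖A X (XᵀAX)^{-1}‖₂ ≤ λ_1^{1/2} / ( Σ_{i=1}^{j} λ_{ik} σ_min(W_iᵀX)² )^{1/2}. -/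

import Mathlib

open Matrix

/-- The spectral norm (largest singular value) of a real matrix,
as the `ℓ²→ℓ²` operator norm. -/
noncomputable def matSpectralNorm {m n : ℕ} (M : Matrix (Fin m) (Fin n) ℝ) : ℝ :=
  ‖LinearMap.toContinuousLinearMap (Matrix.toEuclideanLin M)‖

/-- The smallest singular value of a square real matrix: `σ_min(M) = min_{‖x‖=1} ‖Mx‖`. -/
noncomputable def sigmaMin {n : ℕ} (M : Matrix (Fin n) (Fin n) ℝ) : ℝ :=
  ⨅ x : Metric.sphere (0 : EuclideanSpace ℝ (Fin n)) 1,
    ‖Matrix.toEuclideanLin M (x : EuclideanSpace ℝ (Fin n))‖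

lemma euclid_norm_eq {m : ℕ} (y : EuclideanSpace ℝ (Fin m)) :
    ‖y‖ = Real.sqrt ((WithLp.equiv 2 (Fin m → ℝ) y) ⬝ᵥ (WithLp.equiv 2 (Fin m → ℝ) y)) := by
  rw [EuclideanSpace.norm_eq]
  congr 1
  refine Finset.sum_congr rfl fun i _ => ?_
  rw [Real.norm_eq_abs, sq_abs, sq]
  rfl

lemma dot_self_nonneg {m : ℕ} (y : Fin m → ℝ) : 0 ≤ y ⬝ᵥ y :=
  Finset.sum_nonneg fun i _ => mul_self_nonneg _

lemma sigmaMin_nonneg {n : ℕ} (M : Matrix (Fin n) (Fin n) ℝ) : 0 ≤ sigmaMin M := by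
  by_cases h : Nonempty (Metric.sphere (0 : EuclideanSpace ℝ (Fin n)) 1)
  · exact le_ciInf fun x => norm_nonneg _
  · rw [not_nonempty_iff] at h
    simp [sigmaMin, iInf, Set.range_eq_empty_iff.mpr h, Real.sInf_empty]

lemma sigmaMin_sq_le {m : ℕ} (hm : 1 ≤ m) (M : Matrix (Fin m) (Fin m) ℝ) (v : Fin m → ℝ) :
    sigmaMin M ^ 2 * (v ⬝ᵥ v) ≤ (M *ᵥ v) ⬝ᵥ (M *ᵥ v) := by
  by_cases hv : v = 0
  · simp [hv]
  -- x := normalized v in EuclideanSpace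
  set y : EuclideanSpace ℝ (Fin m) := (WithLp.equiv 2 (Fin m → ℝ)).symm v with hy
  have hyne : y ≠ 0 := by
    simpa [hy] using hv
  have hnv : ‖y‖ ≠ 0 := norm_ne_zero_iff.mpr hyne
  set x : EuclideanSpace ℝ (Fin m) := ‖y‖⁻¹ • y with hx
  have hxs : x ∈ Metric.sphere (0 : EuclideanSpace ℝ (Fin m)) 1 := by
    simp [hx, norm_smul, abs_of_nonneg (inv_nonneg.mpr (norm_nonneg y)),
      inv_mul_cancel₀ hnv]
  have hbdd : BddBelow (Set.range fun x : Metric.sphere (0 : EuclideanSpace ℝ (Fin m)) 1 =>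
      ‖Matrix.toEuclideanLin M (x : EuclideanSpace ℝ (Fin m))‖) := by
    refine ⟨0, ?_⟩
    rintro r ⟨z, rfl⟩
    exact norm_nonneg _
  have h1 : sigmaMin M ≤ ‖Matrix.toEuclideanLin M x‖ :=
    ciInf_le hbdd (⟨x, hxs⟩ : Metric.sphere (0 : EuclideanSpace ℝ (Fin m)) 1)
  have h2 : ‖Matrix.toEuclideanLin M x‖ = ‖y‖⁻¹ * ‖Matrix.toEuclideanLin M y‖ := by
    rw [hx, LinearMap.map_smul, norm_smul, Real.norm_eq_abs,
      abs_of_nonneg (inv_nonneg.mpr (norm_nonneg y))]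
  have key : sigmaMin M * ‖y‖ ≤ ‖Matrix.toEuclideanLin M y‖ := by
    have h3 := mul_le_mul_of_nonneg_right (h1.trans h2.le) (norm_nonneg y)
    calc sigmaMin M * ‖y‖ ≤ ‖y‖⁻¹ * ‖Matrix.toEuclideanLin M y‖ * ‖y‖ := h3
      _ = ‖Matrix.toEuclideanLin M y‖ := by field_simp
  have hnn : 0 ≤ sigmaMin M * ‖y‖ := mul_nonneg (sigmaMin_nonneg M) (norm_nonneg y)
  have hsq := mul_self_le_mul_self hnn key
  have hMy : ‖Matrix.toEuclideanLin M y‖ * ‖Matrix.toEuclideanLin M y‖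
      = (M *ᵥ v) ⬝ᵥ (M *ᵥ v) := by
    rw [euclid_norm_eq]
    rw [Real.mul_self_sqrt (dot_self_nonneg _)]
    rfl
  have hyv : ‖y‖ * ‖y‖ = v ⬝ᵥ v := by
    rw [euclid_norm_eq, Real.mul_self_sqrt (dot_self_nonneg _)]
    simp [hy]
  calc sigmaMin M ^ 2 * (v ⬝ᵥ v) = (sigmaMin M * ‖y‖) * (sigmaMin M * ‖y‖) := by
        rw [← hyv]; ring
    _ ≤ ‖Matrix.toEuclideanLin M y‖ * ‖Matrix.toEuclideanLin M y‖ := hsq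
    _ = (M *ᵥ v) ⬝ᵥ (M *ᵥ v) := hMy

/-- Let `A = W Λ Wᵀ` with `W` orthogonal and `Λ = diag(λ_1,…,λ_n)`,
`λ_1 ≥ … ≥ λ_n ≥ 0`. For `1 ≤ i ≤ j` (with `jk ≤ n`), let `W_i ∈ ℝ^{n×k}` consist of
columns `(i−1)k+1, …, ik` of `W`. If `X ∈ ℝ^{n×k}` is such that `XᵀAX` is invertible
and `Σ_{i=1}^{j} λ_{ik} σ_min(W_iᵀX)² > 0`, then
`‖A X (XᵀAX)⁻¹‖₂ ≤ λ_1^{1/2} / (Σ_{i=1}^{j} λ_{ik} σ_min(W_iᵀX)²)^{1/2}`. -/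
theorem stmt4 {n k j : ℕ} (hk : 1 ≤ k) (hj : 1 ≤ j) (hjk : j * k ≤ n)
    (A : Matrix (Fin n) (Fin n) ℝ) (hA : A.PosSemidef)
    (lam : Fin n → ℝ) (hlam : Antitone lam) (hlam0 : ∀ i, 0 ≤ lam i)
    (W : Matrix (Fin n) (Fin n) ℝ) (hW : Wᵀ * W = 1)
    (hAeig : A = W * Matrix.diagonal lam * Wᵀ)
    (Wsub : Fin j → Matrix (Fin n) (Fin k) ℝ)
    (hWsub : ∀ (i : Fin j) (t : Fin n) (s : Fin k) (h : i.val * k + s.val < n),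
      Wsub i t s = W t ⟨i.val * k + s.val, h⟩)
    (X : Matrix (Fin n) (Fin k) ℝ)
    (hXAX : IsUnit (Xᵀ * A * X))
    (hpos : 0 < ∑ i : Fin j,
        lam ⟨i.val * k + (k - 1), by
            have h0 : i.val + 1 ≤ j := i.isLt
            have h1 : (i.val + 1) * k ≤ j * k := Nat.mul_le_mul_right k h0
            have h2 : (i.val + 1) * k = i.val * k + k := by ring
            omega⟩ *
          (sigmaMin ((Wsub i)ᵀ * X)) ^ 2) :
    matSpectralNorm (A * X * (Xᵀ * A * X)⁻¹) ≤
      Real.sqrt (lam ⟨0, by have := Nat.mul_le_mul hj hk; omega⟩) /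
        Real.sqrt (∑ i : Fin j,
          lam ⟨i.val * k + (k - 1), by
              have h0 : i.val + 1 ≤ j := i.isLt
              have h1 : (i.val + 1) * k ≤ j * k := Nat.mul_le_mul_right k h0
              have h2 : (i.val + 1) * k = i.val * k + k := by ring
              omega⟩ *
            (sigmaMin ((Wsub i)ᵀ * X)) ^ 2) := by
  have h0n : 0 < n := by have := Nat.mul_le_mul hj hk; omega
  have hidx : ∀ (i : Fin j) (s : Fin k), i.val * k + s.val < n := by
    intro i s
    have h1 : (i.val + 1) * k ≤ j * k := Nat.mul_le_mul_right k i.isLt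
    have h2 : (i.val + 1) * k = i.val * k + k := by ring
    omega
  have hidx' : ∀ i : Fin j, i.val * k + (k - 1) < n := fun i => by
    have := hidx i ⟨k - 1, by omega⟩; simpa using this
  set S : ℝ := ∑ i : Fin j,
      lam ⟨i.val * k + (k - 1), hidx' i⟩ * (sigmaMin ((Wsub i)ᵀ * X)) ^ 2 with hSdef
  have hSpos : 0 < S := hpos
  set l0 : ℝ := lam ⟨0, h0n⟩ with hl0
  have hl0nn : 0 ≤ l0 := hlam0 _
  -- symmetry facts
  have hAsym : Aᵀ = A := by
    ext t s
    have := congrFun (congrFun hA.1 t) s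
    simpa [Matrix.conjTranspose_apply] using this
  have hWWt : W * Wᵀ = 1 := mul_eq_one_comm.mp hW
  set B : Matrix (Fin k) (Fin k) ℝ := Xᵀ * A * X with hB
  have hdet : IsUnit B.det := (Matrix.isUnit_iff_isUnit_det B).mp hXAX
  have hBinv : B * B⁻¹ = 1 := Matrix.mul_nonsing_inv B hdet
  have hBsym : Bᵀ = B := by
    rw [hB, Matrix.transpose_mul, Matrix.transpose_mul, Matrix.transpose_transpose,
      hAsym, Matrix.mul_assoc]
  -- quadratic form identities
  have quad : ∀ u : Fin n → ℝ, u ⬝ᵥ (A *ᵥ u) = ∑ t, lam t * ((Wᵀ *ᵥ u) t) ^ 2 := by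
    intro u
    rw [hAeig, ← Matrix.mulVec_mulVec, ← Matrix.mulVec_mulVec,
      Matrix.dotProduct_mulVec, ← Matrix.mulVec_transpose]
    simp only [dotProduct]
    refine Finset.sum_congr rfl fun t _ => ?_
    rw [Matrix.mulVec_diagonal]
    ring
  have hAsq : A * A = W * Matrix.diagonal (fun t => lam t * lam t) * Wᵀ := by
    have haux : ∀ Y : Matrix (Fin n) (Fin n) ℝ, Wᵀ * (W * Y) = Y := by
      intro Y; rw [← Matrix.mul_assoc, hW, Matrix.one_mul]
    calc A * A = W * (Matrix.diagonal lam * (Wᵀ * (W * (Matrix.diagonal lam * Wᵀ)))) := by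
          rw [hAeig]; simp only [Matrix.mul_assoc]
      _ = W * (Matrix.diagonal lam * (Matrix.diagonal lam * Wᵀ)) := by rw [haux]
      _ = W * Matrix.diagonal (fun t => lam t * lam t) * Wᵀ := by
          rw [← Matrix.mul_assoc, ← Matrix.mul_assoc, Matrix.mul_assoc W,
            Matrix.diagonal_mul_diagonal]
  have quad2 : ∀ u : Fin n → ℝ,
      (A *ᵥ u) ⬝ᵥ (A *ᵥ u) = ∑ t, (lam t * lam t) * ((Wᵀ *ᵥ u) t) ^ 2 := by
    intro u
    have h1 : u ⬝ᵥ ((A * A) *ᵥ u) = (A *ᵥ u) ⬝ᵥ (A *ᵥ u) := by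
      rw [← Matrix.mulVec_mulVec, Matrix.dotProduct_mulVec]
      congr 1
      rw [← Matrix.mulVec_transpose, hAsym]
    rw [← h1, hAsq, ← Matrix.mulVec_mulVec, ← Matrix.mulVec_mulVec,
      Matrix.dotProduct_mulVec, ← Matrix.mulVec_transpose]
    simp only [dotProduct]
    refine Finset.sum_congr rfl fun t _ => ?_
    rw [Matrix.mulVec_diagonal]
    ring
  -- pull X through the quadratic form
  have pullX : ∀ w : Fin k → ℝ, w ⬝ᵥ (B *ᵥ w) = (X *ᵥ w) ⬝ᵥ (A *ᵥ (X *ᵥ w)) := by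
    intro w
    rw [hB, ← Matrix.mulVec_mulVec, ← Matrix.mulVec_mulVec, Matrix.dotProduct_mulVec,
      Matrix.vecMul_transpose]
  -- Step A : coercivity
  have keyA : ∀ w : Fin k → ℝ, S * (w ⬝ᵥ w) ≤ w ⬝ᵥ (B *ᵥ w) := by
    intro w
    rw [pullX, quad]
    set c : Fin n → ℝ := Wᵀ *ᵥ (X *ᵥ w) with hc
    -- blockwise value
    have hblock : ∀ (i : Fin j) (s : Fin k),
        (((Wsub i)ᵀ * X) *ᵥ w) s = c ⟨i.val * k + s.val, hidx i s⟩ := by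
      intro i s
      rw [← Matrix.mulVec_mulVec]
      simp only [hc, Matrix.mulVec, dotProduct, Matrix.transpose_apply]
      refine Finset.sum_congr rfl fun t _ => ?_
      exact congrArg (· * (X *ᵥ w) t) (hWsub i t s (hidx i s))
    have hterm : ∀ i : Fin j,
        lam ⟨i.val * k + (k - 1), hidx' i⟩ * (sigmaMin ((Wsub i)ᵀ * X)) ^ 2 * (w ⬝ᵥ w)
          ≤ ∑ s : Fin k, lam ⟨i.val * k + s.val, hidx i s⟩ *
              (c ⟨i.val * k + s.val, hidx i s⟩) ^ 2 := by
      intro i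
      have h1 : (sigmaMin ((Wsub i)ᵀ * X)) ^ 2 * (w ⬝ᵥ w)
          ≤ ∑ s : Fin k, (c ⟨i.val * k + s.val, hidx i s⟩) ^ 2 := by
        have h2 := sigmaMin_sq_le hk ((Wsub i)ᵀ * X) w
        have h3 : ((((Wsub i)ᵀ * X) *ᵥ w) ⬝ᵥ (((Wsub i)ᵀ * X) *ᵥ w))
            = ∑ s : Fin k, (c ⟨i.val * k + s.val, hidx i s⟩) ^ 2 := by
          simp only [dotProduct]
          refine Finset.sum_congr rfl fun s _ => ?_
          rw [hblock i s]; ring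
        rw [← h3]; exact h2
      calc lam ⟨i.val * k + (k - 1), hidx' i⟩ * (sigmaMin ((Wsub i)ᵀ * X)) ^ 2 * (w ⬝ᵥ w)
          = lam ⟨i.val * k + (k - 1), hidx' i⟩ * ((sigmaMin ((Wsub i)ᵀ * X)) ^ 2 * (w ⬝ᵥ w)) := by
            ring
        _ ≤ lam ⟨i.val * k + (k - 1), hidx' i⟩ *
              ∑ s : Fin k, (c ⟨i.val * k + s.val, hidx i s⟩) ^ 2 :=
            mul_le_mul_of_nonneg_left h1 (hlam0 _)
        _ = ∑ s : Fin k, lam ⟨i.val * k + (k - 1), hidx' i⟩ *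
              (c ⟨i.val * k + s.val, hidx i s⟩) ^ 2 := Finset.mul_sum _ _ _
        _ ≤ ∑ s : Fin k, lam ⟨i.val * k + s.val, hidx i s⟩ *
              (c ⟨i.val * k + s.val, hidx i s⟩) ^ 2 := by
            refine Finset.sum_le_sum fun s _ => ?_
            refine mul_le_mul_of_nonneg_right ?_ (sq_nonneg _)
            refine hlam ?_
            simp only [Fin.mk_le_mk]
            omega
    -- injection into the full sum
    have hι : ∀ p : Fin j × Fin k, p.1.val * k + p.2.val < n := fun p => hidx p.1 p.2
    set ι : Fin j × Fin k → Fin n := fun p => ⟨p.1.val * k + p.2.val, hι p⟩ with hiota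
    have hinj : Function.Injective ι := by
      rintro ⟨i1, s1⟩ ⟨i2, s2⟩ h
      simp only [hiota, Fin.mk.injEq] at h
      have hs1 := s1.isLt
      have hs2 := s2.isLt
      have hii : i1.val = i2.val := by
        by_contra hne
        rcases Nat.lt_or_ge i1.val i2.val with hlt | hge
        · have : (i1.val + 1) * k ≤ i2.val * k := Nat.mul_le_mul_right k hlt
          nlinarith [this, h, hs1]
        · have hlt2 : i2.val < i1.val := by omega
          have : (i2.val + 1) * k ≤ i1.val * k := Nat.mul_le_mul_right k hlt2
          nlinarith [this, h, hs2]
      have hq : i1.val * k = i2.val * k := by rw [hii]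
      have hss : s1.val = s2.val := by omega
      exact Prod.ext (Fin.ext hii) (Fin.ext hss)
    have hsum : ∑ p : Fin j × Fin k, lam (ι p) * (c (ι p)) ^ 2
        ≤ ∑ t : Fin n, lam t * (c t) ^ 2 := by
      rw [← Finset.sum_image (f := fun t => lam t * (c t) ^ 2)
        (fun a _ b _ hab => hinj hab)]
      refine Finset.sum_le_sum_of_subset_of_nonneg (Finset.subset_univ _) ?_
      intro t _ _
      exact mul_nonneg (hlam0 t) (sq_nonneg _)
    calc S * (w ⬝ᵥ w)
        = ∑ i : Fin j, lam ⟨i.val * k + (k - 1), hidx' i⟩ *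
            (sigmaMin ((Wsub i)ᵀ * X)) ^ 2 * (w ⬝ᵥ w) := by
          rw [hSdef, Finset.sum_mul]
      _ ≤ ∑ i : Fin j, ∑ s : Fin k, lam ⟨i.val * k + s.val, hidx i s⟩ *
            (c ⟨i.val * k + s.val, hidx i s⟩) ^ 2 := Finset.sum_le_sum fun i _ => hterm i
      _ = ∑ p : Fin j × Fin k, lam (ι p) * (c (ι p)) ^ 2 := by
          rw [Fintype.sum_prod_type]
      _ ≤ ∑ t : Fin n, lam t * (c t) ^ 2 := hsum
  -- Step B : bound on the inverse quadratic form
  have keyB : ∀ v : Fin k → ℝ, v ⬝ᵥ (B⁻¹ *ᵥ v) ≤ (v ⬝ᵥ v) / S := by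
    intro v
    set w : Fin k → ℝ := B⁻¹ *ᵥ v with hw
    have hvw : B *ᵥ w = v := by
      rw [hw, Matrix.mulVec_mulVec, hBinv, Matrix.one_mulVec]
    have h1 : S * (w ⬝ᵥ w) ≤ w ⬝ᵥ v := by
      have := keyA w
      rwa [hvw] at this
    have hcs : (v ⬝ᵥ w) ^ 2 ≤ (v ⬝ᵥ v) * (w ⬝ᵥ w) := by
      have := Finset.sum_mul_sq_le_sq_mul_sq Finset.univ v w
      simp only [dotProduct]
      calc (∑ i, v i * w i) ^ 2 ≤ (∑ i, v i ^ 2) * ∑ i, w i ^ 2 := this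
        _ = (∑ i, v i * v i) * ∑ i, w i * w i := by
            simp only [sq]
    have h1' : S * (w ⬝ᵥ w) ≤ v ⬝ᵥ w := by
      rw [dotProduct_comm v w]; exact h1
    rw [le_div_iff₀ hSpos]
    rcases eq_or_lt_of_le (dot_self_nonneg w) with hww | hww
    · have ht0 : v ⬝ᵥ w = 0 := by
        have h2 : (v ⬝ᵥ w) ^ 2 ≤ 0 := by
          calc (v ⬝ᵥ w) ^ 2 ≤ (v ⬝ᵥ v) * (w ⬝ᵥ w) := hcs
            _ = 0 := by rw [← hww, mul_zero]
        have := sq_nonneg (v ⬝ᵥ w)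
        have : (v ⬝ᵥ w) ^ 2 = 0 := le_antisymm h2 this
        exact (pow_eq_zero_iff two_ne_zero).mp this
      rw [ht0, zero_mul]
      exact dot_self_nonneg v
    · nlinarith [hcs, h1', hww, hSpos, mul_pos hSpos hww, dot_self_nonneg v]
  -- Step C : norm-squared estimate
  have keyC : ∀ v : Fin k → ℝ,
      (((A * X * B⁻¹) *ᵥ v) ⬝ᵥ ((A * X * B⁻¹) *ᵥ v)) ≤ l0 * ((v ⬝ᵥ v) / S) := by
    intro v
    set w : Fin k → ℝ := B⁻¹ *ᵥ v with hw
    set u : Fin n → ℝ := X *ᵥ w with hu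
    have hMv : (A * X * B⁻¹) *ᵥ v = A *ᵥ u := by
      rw [hu, hw, Matrix.mulVec_mulVec, Matrix.mulVec_mulVec, Matrix.mul_assoc]
    have hquadu : u ⬝ᵥ (A *ᵥ u) = v ⬝ᵥ (B⁻¹ *ᵥ v) := by
      have h1 : u ⬝ᵥ (A *ᵥ u) = w ⬝ᵥ (B *ᵥ w) := (pullX w).symm
      have hvw : B *ᵥ w = v := by
        rw [hw, Matrix.mulVec_mulVec, hBinv, Matrix.one_mulVec]
      rw [h1, hvw, dotProduct_comm, hw]
    have h2 : (A *ᵥ u) ⬝ᵥ (A *ᵥ u) ≤ l0 * (u ⬝ᵥ (A *ᵥ u)) := by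
      rw [quad2, quad, Finset.mul_sum]
      refine Finset.sum_le_sum fun t _ => ?_
      have hlt : lam t ≤ l0 := hlam (by simp [Fin.le_def])
      have := mul_le_mul_of_nonneg_right hlt (mul_nonneg (hlam0 t) (sq_nonneg ((Wᵀ *ᵥ u) t)))
      calc lam t * lam t * ((Wᵀ *ᵥ u) t) ^ 2
          = lam t * (lam t * ((Wᵀ *ᵥ u) t) ^ 2) := by ring
        _ ≤ l0 * (lam t * ((Wᵀ *ᵥ u) t) ^ 2) :=
            mul_le_mul_of_nonneg_right hlt (mul_nonneg (hlam0 t) (sq_nonneg _))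
    rw [hMv]
    calc (A *ᵥ u) ⬝ᵥ (A *ᵥ u) ≤ l0 * (u ⬝ᵥ (A *ᵥ u)) := h2
      _ = l0 * (v ⬝ᵥ (B⁻¹ *ᵥ v)) := by rw [hquadu]
      _ ≤ l0 * ((v ⬝ᵥ v) / S) := mul_le_mul_of_nonneg_left (keyB v) hl0nn
  -- Step D : conclude
  show matSpectralNorm (A * X * B⁻¹) ≤ Real.sqrt l0 / Real.sqrt S
  rw [matSpectralNorm]
  refine ContinuousLinearMap.opNorm_le_bound _
    (div_nonneg (Real.sqrt_nonneg _) (Real.sqrt_nonneg _)) fun x => ?_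
  set v : Fin k → ℝ := WithLp.equiv 2 (Fin k → ℝ) x with hv
  have hfx : ‖LinearMap.toContinuousLinearMap (Matrix.toEuclideanLin (A * X * B⁻¹)) x‖
      = Real.sqrt (((A * X * B⁻¹) *ᵥ v) ⬝ᵥ ((A * X * B⁻¹) *ᵥ v)) := by
    rw [LinearMap.coe_toContinuousLinearMap', euclid_norm_eq]
    rfl
  have hnx : ‖x‖ = Real.sqrt (v ⬝ᵥ v) := euclid_norm_eq x
  rw [hfx, hnx]
  calc Real.sqrt (((A * X * B⁻¹) *ᵥ v) ⬝ᵥ ((A * X * B⁻¹) *ᵥ v))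
      ≤ Real.sqrt (l0 * ((v ⬝ᵥ v) / S)) := Real.sqrt_le_sqrt (keyC v)
    _ = Real.sqrt l0 / Real.sqrt S * Real.sqrt (v ⬝ᵥ v) := by
        rw [Real.sqrt_mul hl0nn, Real.sqrt_div (dot_self_nonneg v)]
        ring
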